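/- Lower tail bound for the largest eigenvalue, case 0 < α ≤ 1: fix an integer d ≥ 3 and α ∈ (0,1]. Then for every δ ∈ (0,1) and every ε > 0, for all sufficiently large n (with n > d, nd even): P( λ₁(X) ≤ (1−δ)·(log n)^{1/α} ) ≤ exp(−n^{1−(1−δ)^α−ε}). -/

import Mathlib

set_option maxHeartbeats 1000000


open MeasureTheory ProbabilityTheory Filter Real
open scoped ENNReal NNReal

noncomputable section

instance matrixMeasurableSpace {m n α : Type*} [MeasurableSpace α] :
    MeasurableSpace (Matrix m n α) :=
  inferInstanceAs (MeasurableSpace (m → n → α))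

/-- The largest eigenvalue of a real square matrix: the supremum of its real eigenvalues. -/
def lam1 {n : ℕ} (M : Matrix (Fin n) (Fin n) ℝ) : ℝ :=
  sSup {r : ℝ | ∃ v : Fin n → ℝ, v ≠ 0 ∧ M.mulVec v = r • v}

/-- The set of adjacency matrices of simple `d`-regular graphs on `n` vertices:
symmetric 0-1 matrices with zero diagonal and all row sums equal to `d`. -/
def RegAdj (n d : ℕ) : Set (Matrix (Fin n) (Fin n) ℝ) :=
  {M | M.IsSymm ∧ (∀ i, M i i = 0) ∧ (∀ i j, M i j = 0 ∨ M i j = 1) ∧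
    ∀ i, (∑ j, M i j) = (d : ℝ)}

/-- A Weibull distribution with shape parameter `α` and constants `C₁ C₂`. -/
def IsWeibull (α C₁ C₂ : ℝ) (μ : Measure ℝ) : Prop :=
  IsProbabilityMeasure μ ∧
  ∀ t : ℝ, 1 ≤ t →
    ENNReal.ofReal (C₁ * Real.exp (-t ^ α) / 2) ≤ μ {x | t ≤ x} ∧
    μ {x | t ≤ x} ≤ ENNReal.ofReal (C₂ * Real.exp (-t ^ α) / 2) ∧
    ENNReal.ofReal (C₁ * Real.exp (-t ^ α) / 2) ≤ μ {x | x ≤ -t} ∧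
    μ {x | x ≤ -t} ≤ ENNReal.ofReal (C₂ * Real.exp (-t ^ α) / 2)

/-- The weighted random `d`-regular graph model: `A` is uniformly distributed on the set of
adjacency matrices of simple `d`-regular graphs on `n` vertices, `W` is a symmetric random
matrix with zero diagonal whose upper-triangular entries are i.i.d. with common law `μ`
(a Weibull law with shape parameter `α` and constants `C₁ C₂`), and `W` is independent
of `A`. -/
def WRRGModel (d : ℕ) (α C₁ C₂ : ℝ) {n : ℕ} {Ω : Type*} [MeasurableSpace Ω]
    (P : Measure Ω) (A W : Ω → Matrix (Fin n) (Fin n) ℝ) (μ : Measure ℝ) : Prop :=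
  IsProbabilityMeasure P ∧ Measurable A ∧ Measurable W ∧
  (∀ ω, A ω ∈ RegAdj n d) ∧
  (∀ M ∈ RegAdj n d, P {ω | A ω = M} = ((RegAdj n d).ncard : ℝ≥0∞)⁻¹) ∧
  (∀ ω, (W ω).IsSymm) ∧ (∀ ω i, W ω i i = 0) ∧
  IsWeibull α C₁ C₂ μ ∧
  (∀ i j : Fin n, i < j → Measure.map (fun ω => W ω i j) P = μ) ∧
  iIndepFun
    (fun (p : {p : Fin n × Fin n // p.1 < p.2}) (ω : Ω) => W ω p.1.1 p.1.2) P ∧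
  IndepFun A W P


section Aux

open scoped Classical

lemma lam1_ge {n : ℕ} (M : Matrix (Fin n) (Fin n) ℝ) (hsym : M.IsSymm)
    (h0 : ∀ i, M i i = 0) {i j : Fin n} (hij : i ≠ j) : M i j ≤ lam1 M := by
  haveI : Nonempty (Fin n) := ⟨i⟩
  set E := EuclideanSpace ℝ (Fin n)
  have hherm : M.IsHermitian := by
    rw [Matrix.IsHermitian]
    ext a b
    simp [Matrix.conjTranspose_apply, hsym.apply]
  have hTsym : (Matrix.toEuclideanLin M).IsSymmetric :=
    Matrix.isHermitian_iff_isSymmetric.mp hherm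
  set T := Matrix.toEuclideanLin M with hT
  have hev := hTsym.hasEigenvalue_iSup_of_finiteDimensional
  set r : ℝ := (⨆ x : { x : E // x ≠ 0 }, RCLike.re (inner ℝ (T x) (x:E) : ℝ) / ‖(x : E)‖ ^ 2)
  obtain ⟨v, hv⟩ := hev.exists_hasEigenvector
  have hmem : r ∈ {r : ℝ | ∃ v : Fin n → ℝ, v ≠ 0 ∧ M.mulVec v = r • v} := by
    refine ⟨(WithLp.equiv 2 (Fin n → ℝ)) v, ?_, ?_⟩
    · simpa using hv.2
    · have h2 : T v = r • v := hv.apply_eq_smul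
      have h3 := congrArg (WithLp.equiv 2 (Fin n → ℝ)) h2
      simpa [hT, Matrix.ofLp_toEuclideanLin_apply] using h3
  set Tc := LinearMap.toContinuousLinearMap T with hTc
  have hbdd : BddAbove {r : ℝ | ∃ v : Fin n → ℝ, v ≠ 0 ∧ M.mulVec v = r • v} := by
    refine ⟨‖Tc‖, fun s hs => ?_⟩
    obtain ⟨w, hw0, hww⟩ := hs
    set wE : E := (WithLp.equiv 2 (Fin n → ℝ)).symm w with hwE
    have hwE0 : wE ≠ 0 := by intro h; exact hw0 (by simpa [hwE] using congrArg WithLp.ofLp h)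
    have hTw : Tc wE = s • wE := by
      show T wE = s • wE
      rw [hwE, WithLp.equiv_symm_apply, Matrix.toEuclideanLin_apply_piLp_toLp, hww]
      simp
    have hnorm : |s| * ‖wE‖ ≤ ‖Tc‖ * ‖wE‖ := by
      calc |s| * ‖wE‖ = ‖s • wE‖ := by rw [norm_smul]; simp
      _ = ‖Tc wE‖ := by rw [hTw]
      _ ≤ ‖Tc‖ * ‖wE‖ := Tc.le_opNorm wE
    have hwpos : (0:ℝ) < ‖wE‖ := norm_pos_iff.mpr hwE0
    have : |s| ≤ ‖Tc‖ := le_of_mul_le_mul_right hnorm hwpos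
    exact le_trans (le_abs_self s) this
  -- now M i j ≤ r
  have hMij : M i j ≤ r := by
    set u : Fin n → ℝ := Pi.single i 1 + Pi.single j 1 with hu
    set v0 : E := (WithLp.equiv 2 (Fin n → ℝ)).symm u with hv0
    have hv00 : v0 ≠ 0 := by
      intro h
      have := congrFun (congrArg (WithLp.equiv 2 (Fin n → ℝ)) h) i
      rw [hv0] at this
      simp [hu, Pi.single_apply, hij] at this
    have hsum : ∀ f : Fin n → ℝ, ∑ k, f k * u k = f i + f j := by
      intro f
      simp [hu, Pi.single_apply, mul_add, Finset.sum_add_distrib, mul_ite, hij]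
    have hTv0 : T v0 = (WithLp.equiv 2 (Fin n → ℝ)).symm
        (M.mulVec u) := by
      rw [hv0]; exact Matrix.toEuclideanLin_apply_piLp_toLp M _
    have hmv : ∀ k, M.mulVec u k = M k i + M k j := by
      intro k
      simpa [Matrix.mulVec, dotProduct] using hsum (fun l => M k l)
    have hinner : (inner ℝ (T v0) (v0:E) : ℝ) = 2 * M i j := by
      rw [hTv0, hv0, PiLp.inner_apply]
      simp only [WithLp.equiv_symm_apply, WithLp.ofLp_toLp, RCLike.inner_apply', conj_trivial]
      rw [hsum (fun k => M.mulVec u k)]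
      have hji : M j i = M i j := (hsym.apply j i).symm
      rw [hmv i, hmv j, h0 i, h0 j, hji]
      ring
    have hnorm0 : ‖(v0:E)‖ ^ 2 = 2 := by
      rw [← real_inner_self_eq_norm_sq, PiLp.inner_apply]
      simp only [hv0, WithLp.equiv_symm_apply, WithLp.ofLp_toLp, RCLike.inner_apply', conj_trivial]
      rw [hsum (fun k => u k)]
      simp [hu, Pi.single_apply, hij, hij.symm]
      norm_num
    have : RCLike.re (inner ℝ (T v0) (v0:E) : ℝ) / ‖(v0:E)‖ ^ 2 = M i j := by
      rw [hnorm0]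
      simp only [RCLike.re_to_real, hinner]
      ring
    have hb : BddAbove (Set.range fun x : { x : E // x ≠ 0 } =>
        RCLike.re (inner ℝ (T x) (x:E) : ℝ) / ‖(x : E)‖ ^ 2) := by
      refine ⟨‖Tc‖, fun y hy => ?_⟩
      obtain ⟨⟨x, hx0⟩, rfl⟩ := hy
      have h1 : (inner ℝ (T x) (x:E) : ℝ) ≤ ‖Tc‖ * ‖x‖ ^ 2 := by
        calc (inner ℝ (T x) (x:E) : ℝ) ≤ ‖T x‖ * ‖x‖ := real_inner_le_norm _ _
        _ ≤ (‖Tc‖ * ‖x‖) * ‖x‖ := by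
            have : ‖T x‖ = ‖Tc x‖ := rfl
            rw [this]
            exact mul_le_mul_of_nonneg_right (Tc.le_opNorm x) (norm_nonneg x)
        _ = ‖Tc‖ * ‖x‖ ^ 2 := by ring
      have hx2 : (0:ℝ) < ‖x‖ ^ 2 := pow_pos (norm_pos_iff.mpr hx0) 2
      rw [div_le_iff₀ hx2]
      simpa using h1
    calc M i j = RCLike.re (inner ℝ (T v0) (v0:E) : ℝ) / ‖(v0:E)‖ ^ 2 := this.symm
    _ ≤ r := le_ciSup hb ⟨v0, hv00⟩
  exact le_trans hMij (le_csSup hbdd hmem)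

lemma regAdj_finite (n d : ℕ) : (RegAdj n d).Finite := by
  haveI : Finite (Matrix (Fin n) (Fin n) Bool) :=
    inferInstanceAs (Finite (Fin n → Fin n → Bool))
  apply Set.Finite.subset (Set.finite_range
    (fun B : Matrix (Fin n) (Fin n) Bool =>
      Matrix.of (fun i j => if B i j then (1:ℝ) else 0)))
  intro M hM
  refine ⟨Matrix.of (fun i j => if M i j = 1 then true else false), ?_⟩
  ext i j
  rcases hM.2.2.1 i j with h | h <;> simp [h]

lemma regAdj_card {n d : ℕ} (hd : 3 ≤ d) {M : Matrix (Fin n) (Fin n) ℝ}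
    (hM : M ∈ RegAdj n d) :
    n ≤ (Finset.univ.filter
      (fun q : {p : Fin n × Fin n // p.1 < p.2} => M q.1.1 q.1.2 = 1)).card := by
  obtain ⟨hsym, hdiag, h01, hrow⟩ := hM
  set S : Finset (Fin n × Fin n) := Finset.univ.filter (fun p => p.1 < p.2) with hS
  -- card of subtype filter equals real sum over S
  have hcard : ((Finset.univ.filter
      (fun q : {p : Fin n × Fin n // p.1 < p.2} => M q.1.1 q.1.2 = 1)).card : ℝ)
      = ∑ p ∈ S, M p.1 p.2 := by
    rw [← Finset.sum_boole]
    rw [← Finset.sum_subtype S (by simp [hS]) (fun p : Fin n × Fin n => if M p.1 p.2 = 1 then (1:ℝ) else 0)]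
    apply Finset.sum_congr rfl
    intro p hp
    rcases h01 p.1 p.2 with h | h <;> simp [h]
  have htot : ∑ p : Fin n × Fin n, M p.1 p.2 = (n : ℝ) * d := by
    rw [Fintype.sum_prod_type]
    simp [hrow, Finset.sum_const, Finset.card_univ, mul_comm]
  have hswap : ∑ p ∈ Finset.univ.filter (fun p : Fin n × Fin n => p.2 < p.1), M p.1 p.2
      = ∑ p ∈ S, M p.1 p.2 := by
    apply Finset.sum_nbij' (fun p => Prod.swap p) (fun p => Prod.swap p)
    · intro a ha
      simp only [hS, Finset.mem_filter, Finset.mem_univ, true_and, Prod.fst_swap, Prod.snd_swap]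
      simp only [Finset.mem_filter, Finset.mem_univ, true_and] at ha
      exact ha
    · intro a ha
      simp only [Finset.mem_filter, Finset.mem_univ, true_and]
      simp only [hS, Finset.mem_filter, Finset.mem_univ, true_and] at ha
      exact ha
    · intro a ha; simp
    · intro a ha; simp
    · intro a ha
      simp only [Prod.fst_swap, Prod.snd_swap]
      exact (hsym.apply a.1 a.2).symm
  have hnotlt : ∑ p ∈ Finset.univ.filter (fun p : Fin n × Fin n => ¬ p.1 < p.2), M p.1 p.2
      = ∑ p ∈ S, M p.1 p.2 := by
    rw [← hswap]
    apply (Finset.sum_subset ?_ ?_).symm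
    · intro p hp
      simp only [Finset.mem_filter, Finset.mem_univ, true_and] at hp ⊢
      exact fun h => absurd hp (lt_asymm h)
    · intro p hp hnp
      simp only [Finset.mem_filter, Finset.mem_univ, true_and] at hp hnp
      have : p.1 = p.2 := le_antisymm (not_lt.mp hnp) (not_lt.mp hp)
      have := hdiag p.1
      rw [show p.2 = p.1 from ‹p.1 = p.2›.symm]
      exact this
  have hsplit : ∑ p : Fin n × Fin n, M p.1 p.2
      = (∑ p ∈ S, M p.1 p.2) + ∑ p ∈ S, M p.1 p.2 := by
    rw [← Finset.sum_filter_add_sum_filter_not Finset.univ (fun p : Fin n × Fin n => p.1 < p.2), hnotlt]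
  have h2 : 2 * ∑ p ∈ S, M p.1 p.2 = (n:ℝ) * d := by
    rw [← htot, hsplit]; ring
  have hge : (n : ℝ) ≤ ∑ p ∈ S, M p.1 p.2 := by
    have hd3 : (3:ℝ) ≤ (d:ℝ) := by exact_mod_cast hd
    nlinarith [h2]
  rw [← hcard] at hge
  exact_mod_cast hge

end Aux

/-- **Lower tail bound for the largest eigenvalue, case `0 < α ≤ 1`.** -/
theorem largest_eigenvalue_lower_tail_heavy
    (d : ℕ) (hd : 3 ≤ d) (α : ℝ) (hα : 0 < α) (hα1 : α ≤ 1)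
    (C₁ C₂ : ℝ) (hC₁ : 0 < C₁) (hC₂ : 0 < C₂)
    (Ω : ℕ → Type*) [∀ n, MeasurableSpace (Ω n)]
    (P : ∀ n, Measure (Ω n))
    (A W : ∀ n, Ω n → Matrix (Fin n) (Fin n) ℝ)
    (μ : ℕ → Measure ℝ)
    (hmodel : ∀ n, d < n → Even (n * d) →
      WRRGModel d α C₁ C₂ (P n) (A n) (W n) (μ n)) :
    ∀ δ : ℝ, 0 < δ → δ < 1 → ∀ ε : ℝ, 0 < ε →
      ∀ᶠ n in atTop ⊓ 𝓟 {n : ℕ | d < n ∧ Even (n * d)},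
        P n {ω | lam1 (Matrix.hadamard (A n ω) (W n ω)) ≤
            (1 - δ) * Real.log n ^ (1 / α)} ≤
          ENNReal.ofReal (Real.exp (-(n : ℝ) ^ (1 - (1 - δ) ^ α - ε))) := by
  classical
  intro δ hδ0 hδ1 ε hε
  rw [eventually_inf_principal]
  set γ : ℝ := (1 - δ) ^ α with hγ
  have hγpos : 0 < γ := Real.rpow_pos_of_pos (by linarith) α
  have hev1 : ∀ᶠ n : ℕ in atTop, C₁ * (n:ℝ) ^ (-γ) ≤ 2 := by
    have h0 : Tendsto (fun n : ℕ => C₁ * (n:ℝ) ^ (-γ)) atTop (nhds (C₁ * 0)) :=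
      ((tendsto_rpow_neg_atTop hγpos).comp tendsto_natCast_atTop_atTop).const_mul C₁
    rw [mul_zero] at h0
    exact h0.eventually_le_const (by norm_num)
  have hev2 : ∀ᶠ n : ℕ in atTop, 2 * Real.exp 1 / C₁ ≤ (n:ℝ) ^ ε :=
    ((tendsto_rpow_atTop hε).comp tendsto_natCast_atTop_atTop).eventually_ge_atTop _
  filter_upwards [hev1, hev2, eventually_ge_atTop 1] with n h1 h2 hn1 hcond
  obtain ⟨hdn, hne⟩ := hcond
  obtain ⟨hPprob, hAmeas, hWmeas, hAreg, hAunif, hWsymm, hWdiag, hWeib, hWlaw, hWindep, hAW⟩ :=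
    hmodel n hdn hne
  haveI := hPprob
  haveI := hWeib.1
  -- real analysis setup
  have hn1R : (1:ℝ) ≤ n := by exact_mod_cast hn1
  have hnpos : (0:ℝ) < n := by linarith
  have hlog : (0:ℝ) ≤ Real.log n := Real.log_nonneg hn1R
  set t : ℝ := (1 - δ) * Real.log n ^ (1 / α) with htdef
  have ht0 : 0 ≤ t := mul_nonneg (by linarith) (Real.rpow_nonneg hlog _)
  have hαne : α ≠ 0 := ne_of_gt hα
  have htα : t ^ α = γ * Real.log n := by
    rw [htdef, Real.mul_rpow (by linarith) (Real.rpow_nonneg hlog _),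
      ← Real.rpow_mul hlog, one_div_mul_cancel hαne, Real.rpow_one, hγ]
  have hexp : Real.exp (-t ^ α) = (n:ℝ) ^ (-γ) := by
    rw [htα, Real.rpow_def_of_pos hnpos]
    congr 1
    ring
  set c : ℝ := C₁ * Real.exp (-(t + 1) ^ α) / 2 with hcdef
  have hc0 : 0 ≤ c := by positivity
  have hsub : (t + 1) ^ α ≤ t ^ α + 1 := by
    have hh := NNReal.rpow_add_le_add_rpow (Real.toNNReal t) 1 hα.le hα1
    have hh2 := NNReal.coe_le_coe.mpr hh
    push_cast [NNReal.coe_rpow] at hh2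
    rw [Real.coe_toNNReal t ht0] at hh2
    simpa using hh2
  have hmono : t ^ α ≤ (t + 1) ^ α :=
    Real.rpow_le_rpow ht0 (by linarith) hα.le
  have hcle : c ≤ C₁ * (n:ℝ) ^ (-γ) / 2 := by
    rw [hcdef, ← hexp]
    have : Real.exp (-(t+1)^α) ≤ Real.exp (-t^α) := Real.exp_le_exp.mpr (by linarith)
    nlinarith [this, hC₁.le]
  have hc1 : c ≤ 1 := by nlinarith [hcle, h1]
  have hclow : C₁ * (n:ℝ) ^ (-γ) / (2 * Real.exp 1) ≤ c := by
    rw [hcdef, ← hexp]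
    have he1 : Real.exp (-t^α) / Real.exp 1 = Real.exp (-t^α - 1) := (Real.exp_sub _ _).symm
    have he2 : Real.exp (-t^α - 1) ≤ Real.exp (-(t+1)^α) := Real.exp_le_exp.mpr (by linarith)
    calc C₁ * Real.exp (-t^α) / (2*Real.exp 1) = C₁ * (Real.exp (-t^α)/Real.exp 1) / 2 := by
          ring
    _ = C₁ * Real.exp (-t^α - 1) / 2 := by rw [he1]
    _ ≤ C₁ * Real.exp (-(t+1)^α) / 2 := by nlinarith [hC₁.le, he2]
  have hkey : (n:ℝ) ^ (1 - γ - ε) ≤ c * n := by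
    have e1 : (n:ℝ)^(-γ) * (n:ℝ) = (n:ℝ)^(1-γ-ε) * (n:ℝ)^ε := by
      have : (n:ℝ)^(-γ) * (n:ℝ)^(1:ℝ) = (n:ℝ)^(1-γ-ε) * (n:ℝ)^ε := by
        rw [← Real.rpow_add hnpos, ← Real.rpow_add hnpos]
        congr 1
        ring
      simpa using this
    have h3 : C₁ * (n:ℝ)^(-γ) / (2*Real.exp 1) * (n:ℝ) ≤ c * n :=
      mul_le_mul_of_nonneg_right hclow hnpos.le
    have hepos : (0:ℝ) < Real.exp 1 := Real.exp_pos 1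
    have hpβ : (0:ℝ) < (n:ℝ)^(1-γ-ε) := Real.rpow_pos_of_pos hnpos _
    have h4 : C₁ * (n:ℝ)^(-γ) / (2*Real.exp 1) * (n:ℝ)
        = C₁ * ((n:ℝ)^(1-γ-ε) * (n:ℝ)^ε) / (2*Real.exp 1) := by
      rw [← e1]
      ring
    have h2' : 2 * Real.exp 1 ≤ (n:ℝ)^ε * C₁ := (div_le_iff₀ hC₁).mp h2
    have h5 : (n:ℝ)^(1-γ-ε) ≤ C₁ * ((n:ℝ)^(1-γ-ε) * (n:ℝ)^ε) / (2*Real.exp 1) := by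
      rw [le_div_iff₀ (by positivity)]
      calc (n:ℝ)^(1-γ-ε) * (2*Real.exp 1) ≤ (n:ℝ)^(1-γ-ε) * ((n:ℝ)^ε * C₁) :=
        mul_le_mul_of_nonneg_left h2' hpβ.le
      _ = C₁ * ((n:ℝ)^(1-γ-ε) * (n:ℝ)^ε) := by ring
    rw [h4] at h3
    linarith [h3, h5]
  -- measure-theoretic part
  set F : Finset (Matrix (Fin n) (Fin n) ℝ) := (regAdj_finite n d).toFinset with hF
  set SM : Matrix (Fin n) (Fin n) ℝ → Finset {p : Fin n × Fin n // p.1 < p.2} :=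
    fun M => Finset.univ.filter (fun q => M q.1.1 q.1.2 = 1) with hSM
  set UM : Matrix (Fin n) (Fin n) ℝ → Set (Matrix (Fin n) (Fin n) ℝ) :=
    fun M => ⋂ q ∈ SM M, (fun N : Matrix (Fin n) (Fin n) ℝ => N q.1.1 q.1.2) ⁻¹' Set.Iic t
    with hUM
  have hmeaseval : ∀ (i j : Fin n), Measurable (fun N : Matrix (Fin n) (Fin n) ℝ => N i j) :=
    fun i j => (measurable_pi_apply j).comp (measurable_pi_apply i)
  have hUmeas : ∀ M, MeasurableSet (UM M) := fun M =>
    MeasurableSet.biInter (Finset.countable_toSet _)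
      (fun q _ => (hmeaseval q.1.1 q.1.2) measurableSet_Iic)
  have hsing : ∀ M : Matrix (Fin n) (Fin n) ℝ, MeasurableSet {M} := by
    intro M
    haveI : MeasurableSingletonClass (Matrix (Fin n) (Fin n) ℝ) :=
      inferInstanceAs (MeasurableSingletonClass (Fin n → Fin n → ℝ))
    exact measurableSet_singleton M
  have hincl : {ω | lam1 (Matrix.hadamard (A n ω) (W n ω)) ≤ t} ⊆
      ⋃ M ∈ F, ((A n) ⁻¹' {M} ∩ (W n) ⁻¹' UM M) := by
    intro ω hω
    have hMF : A n ω ∈ F := by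
      rw [hF, Set.Finite.mem_toFinset]
      exact hAreg ω
    refine Set.mem_biUnion hMF ⟨rfl, ?_⟩
    simp only [hUM, Set.mem_preimage, Set.mem_iInter, Set.mem_Iic]
    intro q hq
    have hq1 : A n ω q.1.1 q.1.2 = 1 := by
      simpa [hSM] using hq
    set X := Matrix.hadamard (A n ω) (W n ω) with hX
    have hXsym : X.IsSymm := by
      ext i j
      rw [Matrix.transpose_apply, hX, Matrix.hadamard_apply, Matrix.hadamard_apply,
        (hAreg ω).1.apply, (hWsymm ω).apply]
    have hXdiag : ∀ i, X i i = 0 := fun i => by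
      rw [hX, Matrix.hadamard_apply, hWdiag ω i, mul_zero]
    have hlam := lam1_ge X hXsym hXdiag (ne_of_lt q.2)
    have hXq : X q.1.1 q.1.2 = W n ω q.1.1 q.1.2 := by
      rw [hX, Matrix.hadamard_apply, hq1, one_mul]
    rw [hXq] at hlam
    exact hlam.trans hω
  -- bound each term
  have hterm : ∀ M ∈ F, P n ((A n) ⁻¹' {M} ∩ (W n) ⁻¹' UM M) ≤
      P n ((A n) ⁻¹' {M}) * ENNReal.ofReal (Real.exp (-(c * n))) := by
    intro M hMF
    have hMreg : M ∈ RegAdj n d := by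
      rw [hF, Set.Finite.mem_toFinset] at hMF
      exact hMF
    have hprod : P n ((A n) ⁻¹' {M} ∩ (W n) ⁻¹' UM M)
        = P n ((A n) ⁻¹' {M}) * P n ((W n) ⁻¹' UM M) :=
      hAW.measure_inter_preimage_eq_mul _ _ (hsing M) (hUmeas M)
    have hWU : (W n) ⁻¹' UM M =
        ⋂ q ∈ SM M, (fun ω => W n ω q.1.1 q.1.2) ⁻¹' Set.Iic t := by
      rw [hUM]
      ext ω
      simp [Set.mem_iInter]
    have hindep := hWindep.measure_inter_preimage_eq_mul (SM M)
      (sets := fun _ => Set.Iic t) (fun q _ => measurableSet_Iic)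
    have hfac : ∀ q : {p : Fin n × Fin n // p.1 < p.2}, q ∈ SM M →
        P n ((fun ω => W n ω q.1.1 q.1.2) ⁻¹' Set.Iic t) = μ n (Set.Iic t) := by
      intro q _
      have hme : Measurable (fun ω : Ω n => W n ω q.1.1 q.1.2) :=
        (hmeaseval q.1.1 q.1.2).comp hWmeas
      rw [← hWlaw q.1.1 q.1.2 q.2, Measure.map_apply hme measurableSet_Iic]
    have hμle : μ n (Set.Iic t) ≤ 1 - ENNReal.ofReal c := by
      have hW2 := (hWeib.2 (t+1) (by linarith)).1
      have hsubset : Set.Iic t ⊆ {x : ℝ | t + 1 ≤ x}ᶜ := by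
        intro x hx hx'
        simp only [Set.mem_Iic] at hx
        simp only [Set.mem_setOf_eq] at hx'
        linarith
      have hIci : {x : ℝ | t + 1 ≤ x} = Set.Ici (t+1) := rfl
      have hcompl : μ n {x : ℝ | t + 1 ≤ x}ᶜ = 1 - μ n {x : ℝ | t + 1 ≤ x} := by
        rw [hIci]
        exact prob_compl_eq_one_sub measurableSet_Ici
      refine (measure_mono hsubset).trans ?_
      rw [hcompl]
      exact tsub_le_tsub_left hW2 1
    have hcount : n ≤ (SM M).card := regAdj_card hd hMreg
    have hpow : P n ((W n) ⁻¹' UM M) ≤ ENNReal.ofReal (Real.exp (-(c * n))) := by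
      rw [hWU, hindep]
      calc ∏ q ∈ SM M, P n ((fun ω => W n ω q.1.1 q.1.2) ⁻¹' Set.Iic t)
          = ∏ _q ∈ SM M, μ n (Set.Iic t) := Finset.prod_congr rfl hfac
      _ = (μ n (Set.Iic t)) ^ (SM M).card := Finset.prod_const _
      _ ≤ (1 - ENNReal.ofReal c) ^ (SM M).card := pow_le_pow_left' hμle _
      _ ≤ (1 - ENNReal.ofReal c) ^ n := pow_le_pow_right_of_le_one' tsub_le_self hcount
      _ ≤ ENNReal.ofReal (Real.exp (-(c * n))) := by
        have h1c : (1 : ℝ≥0∞) - ENNReal.ofReal c = ENNReal.ofReal (1 - c) := by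
          rw [← ENNReal.ofReal_one]
          exact (ENNReal.ofReal_sub 1 hc0).symm
        rw [h1c, ← ENNReal.ofReal_pow (by linarith : (0:ℝ) ≤ 1 - c)]
        apply ENNReal.ofReal_le_ofReal
        calc (1 - c) ^ n ≤ (Real.exp (-c)) ^ n := by
              apply pow_le_pow_left₀ (by linarith)
              linarith [Real.add_one_le_exp (-c)]
        _ = Real.exp (-(c * n)) := by
              rw [← Real.exp_nat_mul]
              congr 1
              ring
    rw [hprod]
    exact mul_le_mul_right hpow _
  have hsum1 : ∑ M ∈ F, P n ((A n) ⁻¹' {M}) ≤ 1 := by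
    have hdisj : Set.PairwiseDisjoint (↑F) (fun M => (A n) ⁻¹' {M}) := by
      intro M _ M' _ hMM'
      apply Set.disjoint_left.mpr
      intro ω hω hω'
      exact hMM' ((Set.mem_preimage.mp hω).symm.trans (Set.mem_preimage.mp hω'))
    rw [← measure_biUnion_finset hdisj (fun M _ => hAmeas (hsing M))]
    exact prob_le_one
  calc P n {ω | lam1 (Matrix.hadamard (A n ω) (W n ω)) ≤ t}
      ≤ P n (⋃ M ∈ F, ((A n) ⁻¹' {M} ∩ (W n) ⁻¹' UM M)) := measure_mono hincl
  _ ≤ ∑ M ∈ F, P n ((A n) ⁻¹' {M} ∩ (W n) ⁻¹' UM M) := measure_biUnion_finset_le F _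
  _ ≤ ∑ M ∈ F, P n ((A n) ⁻¹' {M}) * ENNReal.ofReal (Real.exp (-(c * n))) :=
      Finset.sum_le_sum hterm
  _ = (∑ M ∈ F, P n ((A n) ⁻¹' {M})) * ENNReal.ofReal (Real.exp (-(c * n))) :=
      by rw [← Finset.sum_mul]
  _ ≤ 1 * ENNReal.ofReal (Real.exp (-(c * n))) := mul_le_mul_left hsum1 _
  _ = ENNReal.ofReal (Real.exp (-(c * n))) := one_mul _
  _ ≤ ENNReal.ofReal (Real.exp (-(n:ℝ) ^ (1 - γ - ε))) := by
      apply ENNReal.ofReal_le_ofReal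
      apply Real.exp_le_exp.mpr
      linarith [hkey]
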